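/- Let X be a second countable, locally compact topological space such that every nonempty open subspace of X is non-discrete. Then the set of all d ∈ Met(X) such that for every nonempty open subset U of X the metric space (U, d|_{U²}) is not doubling is a dense G_δ subset of Met(X). -/

import Mathlib

open scoped ENNReal

/-- The distance function of a bundled metric-space structure. -/
noncomputable def mdist {X : Type*} (m : MetricSpace X) (x y : X) : ℝ :=
  m.toDist.dist x y

/-- `Met(X)`: the set of metrics (bundled metric-space structures) on `X` that induce
the given topology of `X`. -/
def MetricsOn (X : Type*) [t : TopologicalSpace X] : Set (MetricSpace X) :=
  { m | m.toUniformSpace.toTopologicalSpace = t }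

/-- The extended sup-metric `D_X` on metrics on `X`. -/
noncomputable def metD {X : Type*} (d e : MetricSpace X) : ℝ≥0∞ :=
  ⨆ p : X × X, ENNReal.ofReal |mdist d p.1 p.2 - mdist e p.1 p.2|

/-- The space `Met(X)` of metrics on `X` compatible with its topology. -/
def Met (X : Type*) [TopologicalSpace X] : Type _ :=
  { m : MetricSpace X // m ∈ MetricsOn X }

/-- The topology on `Met(X)` generated by the extended metric `D_X`, i.e. generated by the
open balls of `D_X`. -/
instance Met.topologicalSpace (X : Type*) [TopologicalSpace X] : TopologicalSpace (Met X) :=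
  TopologicalSpace.generateFrom
    { U | ∃ (d : Met X) (ε : ℝ≥0∞), 0 < ε ∧ U = { e : Met X | metD d.1 e.1 < ε } }

/-- `δ_d(A)`: the diameter of `A` with respect to the metric `m`. -/
noncomputable def setDiam {X : Type*} (m : MetricSpace X) (A : Set X) : ℝ :=
  @Metric.diam X m.toPseudoMetricSpace A

/-- `α_d(A) = inf { d(x,y) : x, y ∈ A, x ≠ y }`. -/
noncomputable def setSep {X : Type*} (m : MetricSpace X) (A : Set X) : ℝ :=
  sInf { r : ℝ | ∃ x ∈ A, ∃ y ∈ A, x ≠ y ∧ r = mdist m x y }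

/-- The metric subspace `(U, d|_{U²})` of `(X, m)` is doubling: there are `C, α > 0` such
that every finite subset `A ⊆ U` with at least two points satisfies
`card A ≤ C (δ(A)/α(A))^α`.  (This is exactly the doubling property of the metric space `U`
with the restricted metric, since both `δ` and `α` are computed from `m`.) -/
def IsDoublingOn {X : Type*} (m : MetricSpace X) (U : Set X) : Prop :=
  ∃ C : ℝ, 0 < C ∧ ∃ α : ℝ, 0 < α ∧ ∀ A : Finset X, ↑A ⊆ U → 2 ≤ A.card →
    (A.card : ℝ) ≤ C * (setDiam m ↑A / setSep m ↑A) ^ α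

section metDlemmas

variable {X : Type*}

lemma metD_self (m : MetricSpace X) : metD m m = 0 := by
  simp [metD]

lemma ofReal_abs_le_metD (d e : MetricSpace X) (x y : X) :
    ENNReal.ofReal |mdist d x y - mdist e x y| ≤ metD d e :=
  le_iSup (fun p : X × X => ENNReal.ofReal |mdist d p.1 p.2 - mdist e p.1 p.2|) (x, y)

lemma abs_lt_of_metD_lt {d e : MetricSpace X} {t : ℝ} (h : metD d e < ENNReal.ofReal t)
    (x y : X) : |mdist d x y - mdist e x y| < t := by
  have h1 := lt_of_le_of_lt (ofReal_abs_le_metD d e x y) h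
  have ht : 0 < t := by
    by_contra hc
    push_neg at hc
    simp [ENNReal.ofReal_eq_zero.2 hc] at h1
  exact (ENNReal.ofReal_lt_ofReal_iff ht).1 h1

lemma metD_le_ofReal {d e : MetricSpace X} {t : ℝ}
    (h : ∀ x y, |mdist d x y - mdist e x y| ≤ t) : metD d e ≤ ENNReal.ofReal t :=
  iSup_le fun p => ENNReal.ofReal_le_ofReal (h p.1 p.2)

lemma metD_triangle (a b c : MetricSpace X) : metD a c ≤ metD a b + metD b c := by
  refine iSup_le fun p => ?_
  have habs : |mdist a p.1 p.2 - mdist c p.1 p.2| ≤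
      |mdist a p.1 p.2 - mdist b p.1 p.2| + |mdist b p.1 p.2 - mdist c p.1 p.2| :=
    abs_sub_le _ _ _
  calc ENNReal.ofReal |mdist a p.1 p.2 - mdist c p.1 p.2|
      ≤ ENNReal.ofReal (|mdist a p.1 p.2 - mdist b p.1 p.2| +
        |mdist b p.1 p.2 - mdist c p.1 p.2|) := ENNReal.ofReal_le_ofReal habs
    _ ≤ ENNReal.ofReal |mdist a p.1 p.2 - mdist b p.1 p.2| +
        ENNReal.ofReal |mdist b p.1 p.2 - mdist c p.1 p.2| := ENNReal.ofReal_add_le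
    _ ≤ metD a b + metD b c :=
        add_le_add (ofReal_abs_le_metD a b p.1 p.2) (ofReal_abs_le_metD b c p.1 p.2)

/-- the open ball in `Met X`. -/
def metBall {X : Type*} [TopologicalSpace X] (d : Met X) (ε : ℝ≥0∞) : Set (Met X) :=
  { e : Met X | metD d.1 e.1 < ε }

lemma isOpen_metBall {X : Type*} [TopologicalSpace X] (d : Met X) {ε : ℝ≥0∞} (hε : 0 < ε) :
    IsOpen (metBall d ε) :=
  TopologicalSpace.isOpen_generateFrom_of_mem ⟨d, ε, hε, rfl⟩

lemma isOpen_of_forall_metBall {X : Type*} [TopologicalSpace X] {O : Set (Met X)}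
    (h : ∀ d ∈ O, ∃ ε : ℝ≥0∞, 0 < ε ∧ metBall d ε ⊆ O) : IsOpen O := by
  choose ε hε hsub using h
  have hO : O = ⋃ (d : Met X) (hd : d ∈ O), metBall d (ε d hd) := by
    ext e
    simp only [Set.mem_iUnion]
    constructor
    · intro he
      refine ⟨e, he, ?_⟩
      show metD e.1 e.1 < _
      rw [metD_self]
      exact hε e he
    · rintro ⟨d, hd, hmem⟩
      exact hsub d hd hmem
  rw [hO]
  exact isOpen_iUnion fun d => isOpen_iUnion fun hd => isOpen_metBall _ (hε d hd)

/-- every open set of `Met X` contains a ball around each of its points. -/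
lemma exists_metBall_subset {X : Type*} [TopologicalSpace X] {O : Set (Met X)}
    (hO : IsOpen O) {d : Met X} (hd : d ∈ O) : ∃ ε : ℝ≥0∞, 0 < ε ∧ metBall d ε ⊆ O := by
  induction hO with
  | basic V hV =>
      obtain ⟨c, δ, hδ, rfl⟩ := hV
      refine ⟨δ - metD c.1 d.1, ?_, ?_⟩
      · simpa [tsub_pos_iff_lt] using hd
      · intro e he
        have hcd : metD c.1 d.1 < δ := hd
        have : metD c.1 e.1 ≤ metD c.1 d.1 + metD d.1 e.1 := metD_triangle _ _ _
        calc metD c.1 e.1 ≤ metD c.1 d.1 + metD d.1 e.1 := this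
          _ < metD c.1 d.1 + (δ - metD c.1 d.1) :=
              ENNReal.add_lt_add_left (ne_top_of_lt hcd) he
          _ ≤ δ := by
              rw [add_tsub_cancel_of_le hcd.le]
  | univ => exact ⟨1, one_pos, fun _ _ => trivial⟩
  | inter U V _ _ hU hV =>
      obtain ⟨ε₁, hε₁, h₁⟩ := hU hd.1
      obtain ⟨ε₂, hε₂, h₂⟩ := hV hd.2
      exact ⟨min ε₁ ε₂, lt_min hε₁ hε₂, fun e he =>
        ⟨h₁ (show metD d.1 e.1 < ε₁ from lt_of_lt_of_le he (min_le_left _ _)),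
         h₂ (show metD d.1 e.1 < ε₂ from lt_of_lt_of_le he (min_le_right _ _))⟩⟩
  | sUnion S hS ih =>
      obtain ⟨V, hV, hdV⟩ := hd
      obtain ⟨ε, hε, h⟩ := ih V hV hdV
      exact ⟨ε, hε, fun e he => ⟨V, hV, h he⟩⟩

end metDlemmas

section sepLemmas
variable {X : Type*} (m : MetricSpace X) (A : Finset X)

lemma mdist_nonneg (x y : X) : 0 ≤ mdist m x y := @dist_nonneg X m.toPseudoMetricSpace x y

lemma mdist_pos {x y : X} (h : x ≠ y) : 0 < mdist m x y := by
  have := @dist_pos X m x y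
  exact this.2 h

lemma mdist_comm (x y : X) : mdist m x y = mdist m y x := @dist_comm X m.toPseudoMetricSpace x y

lemma mdist_triangle (x y z : X) : mdist m x z ≤ mdist m x y + mdist m y z :=
  @dist_triangle X m.toPseudoMetricSpace x y z

lemma sepSet_bddBelow : BddBelow { r : ℝ | ∃ x ∈ (A : Set X), ∃ y ∈ (A : Set X), x ≠ y ∧ r = mdist m x y } := by
  refine ⟨0, ?_⟩
  rintro r ⟨x, -, y, -, -, rfl⟩
  exact mdist_nonneg m x y

lemma sepSet_nonempty (h2 : 2 ≤ A.card) :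
    { r : ℝ | ∃ x ∈ (A : Set X), ∃ y ∈ (A : Set X), x ≠ y ∧ r = mdist m x y }.Nonempty := by
  obtain ⟨x, hx, y, hy, hxy⟩ := Finset.one_lt_card.1 (by omega : 1 < A.card)
  exact ⟨mdist m x y, x, hx, y, hy, hxy, rfl⟩

lemma setSep_le {x y : X} (hx : x ∈ A) (hy : y ∈ A) (hxy : x ≠ y) :
    setSep m A ≤ mdist m x y :=
  csInf_le (sepSet_bddBelow m A) ⟨x, hx, y, hy, hxy, rfl⟩

lemma le_setSep (h2 : 2 ≤ A.card) {c : ℝ}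
    (h : ∀ x ∈ A, ∀ y ∈ A, x ≠ y → c ≤ mdist m x y) : c ≤ setSep m A := by
  refine le_csInf (sepSet_nonempty m A h2) ?_
  rintro r ⟨x, hx, y, hy, hxy, rfl⟩
  exact h x hx y hy hxy

lemma setSep_pos (h2 : 2 ≤ A.card) : 0 < setSep m A := by
  classical
  have hset : { r : ℝ | ∃ x ∈ (A : Set X), ∃ y ∈ (A : Set X), x ≠ y ∧ r = mdist m x y }
      = ↑(A.offDiag.image fun p => mdist m p.1 p.2) := by
    ext r
    simp only [Finset.coe_image, Set.mem_image, Finset.mem_coe, Finset.mem_offDiag,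
      Set.mem_setOf_eq]
    constructor
    · rintro ⟨x, hx, y, hy, hxy, rfl⟩
      exact ⟨(x, y), ⟨hx, hy, hxy⟩, rfl⟩
    · rintro ⟨⟨x, y⟩, ⟨hx, hy, hxy⟩, rfl⟩
      exact ⟨x, hx, y, hy, hxy, rfl⟩
  have hmem : setSep m A ∈ { r : ℝ | ∃ x ∈ (A : Set X), ∃ y ∈ (A : Set X), x ≠ y ∧ r = mdist m x y } := by
    rw [setSep, hset]
    exact (Set.Nonempty.csInf_mem (by rw [← hset]; exact sepSet_nonempty m A h2)
      (Finset.finite_toSet _))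
  obtain ⟨x, -, y, -, hxy, hr⟩ := hmem
  rw [hr]
  exact mdist_pos m hxy

lemma setDiam_nonneg : 0 ≤ setDiam m (A : Set X) := @Metric.diam_nonneg X _ m.toPseudoMetricSpace

lemma mdist_le_setDiam {x y : X} (hx : x ∈ A) (hy : y ∈ A) :
    mdist m x y ≤ setDiam m (A : Set X) :=
  @Metric.dist_le_diam_of_mem X _ _ _ m.toPseudoMetricSpace
    (Set.Finite.isBounded (A.finite_toSet)) hx hy

lemma setDiam_le {c : ℝ} (hc : 0 ≤ c) (h : ∀ x ∈ A, ∀ y ∈ A, mdist m x y ≤ c) :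
    setDiam m (A : Set X) ≤ c :=
  @Metric.diam_le_of_forall_dist_le X _ m.toPseudoMetricSpace _ hc h

lemma setSep_le_setDiam (h2 : 2 ≤ A.card) : setSep m A ≤ setDiam m (A : Set X) := by
  obtain ⟨x, hx, y, hy, hxy⟩ := Finset.one_lt_card.1 (by omega : 1 < A.card)
  exact le_trans (setSep_le m A hx hy hxy) (mdist_le_setDiam m A hx hy)

end sepLemmas

section Gdelta
variable {X : Type*} [t : TopologicalSpace X] [SecondCountableTopology X]

lemma isGdelta_part :
    IsGδ { d : Met X | ∀ U : Set X, IsOpen U → U.Nonempty → ¬IsDoublingOn d.1 U } := by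
  classical
  obtain ⟨b, hbc, hbne, hbasis⟩ := TopologicalSpace.exists_countable_basis X
  haveI : Countable {V : Set X // V ∈ b} := hbc.to_subtype
  set E : {V : Set X // V ∈ b} × ℕ → Set (Met X) := fun i =>
    { d : Met X | ∃ A : Finset X, ↑A ⊆ i.1.1 ∧ 2 ≤ A.card ∧
        ((i.2 : ℝ) + 1) * (setDiam d.1 ↑A / setSep d.1 ↑A) ^ ((i.2 : ℝ) + 1) < (A.card : ℝ) }
    with hE
  have hopen : ∀ i, IsOpen (E i) := by
    rintro ⟨⟨V, hVb⟩, k⟩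
    apply isOpen_of_forall_metBall
    rintro d ⟨A, hAV, hA2, hAlt⟩
    set D := setDiam d.1 ↑A with hD
    set s := setSep d.1 ↑A with hs
    have hspos : 0 < s := setSep_pos d.1 A hA2
    have hsD : s ≤ D := setSep_le_setDiam d.1 A hA2
    have hDpos : 0 < D := lt_of_lt_of_le hspos hsD
    -- continuity of the perturbed bound
    set g : ℝ → ℝ := fun u => ((k : ℝ) + 1) * ((D + u) / (s - u)) ^ ((k : ℝ) + 1) with hg
    have hgc : ContinuousAt g 0 := by
      apply ContinuousAt.mul continuousAt_const
      apply ContinuousAt.rpow_const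
      · exact ContinuousAt.div (by fun_prop) (by fun_prop) (by simpa using hspos.ne')
      · left
        simp only [sub_zero, add_zero]
        positivity
    have hg0 : g 0 < (A.card : ℝ) := by simpa [hg] using hAlt
    have hev : ∀ᶠ u in nhds (0 : ℝ), g u < (A.card : ℝ) :=
      hgc.eventually_lt continuousAt_const hg0
    obtain ⟨δ, hδpos, hδ⟩ := Metric.eventually_nhds_iff.1 hev
    set u := min (δ / 2) (s / 2) with hu
    have hupos : 0 < u := lt_min (by positivity) (by positivity)
    have hus : u < s := lt_of_le_of_lt (min_le_right _ _) (by linarith)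
    have hgu : g u < (A.card : ℝ) := by
      apply hδ
      rw [Real.dist_eq, sub_zero, abs_of_pos hupos]
      exact lt_of_le_of_lt (min_le_left _ _) (by linarith)
    refine ⟨ENNReal.ofReal u, by simpa using hupos, ?_⟩
    intro e he
    have hptw : ∀ x y : X, |mdist d.1 x y - mdist e.1 x y| < u := abs_lt_of_metD_lt he
    refine ⟨A, hAV, hA2, ?_⟩
    have hDe : setDiam e.1 ↑A ≤ D + u := by
      refine setDiam_le e.1 A (by positivity) ?_
      intro x hx y hy
      have h1 := hptw x y
      have h2 := mdist_le_setDiam d.1 A hx hy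
      rw [abs_lt] at h1
      linarith [h1.1, h1.2]
    have hse : s - u ≤ setSep e.1 ↑A := by
      refine le_setSep e.1 A hA2 ?_
      intro x hx y hy hxy
      have h1 := hptw x y
      have h2 := setSep_le d.1 A hx hy hxy
      rw [abs_lt] at h1
      linarith [h1.1, h1.2]
    have hratio : setDiam e.1 ↑A / setSep e.1 ↑A ≤ (D + u) / (s - u) := by
      apply div_le_div₀ (by positivity) hDe (by linarith) hse
    calc ((k : ℝ) + 1) * (setDiam e.1 ↑A / setSep e.1 ↑A) ^ ((k : ℝ) + 1)
        ≤ ((k : ℝ) + 1) * ((D + u) / (s - u)) ^ ((k : ℝ) + 1) := by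
          apply mul_le_mul_of_nonneg_left _ (by positivity)
          apply Real.rpow_le_rpow _ hratio (by positivity)
          exact div_nonneg (setDiam_nonneg e.1 A) (le_trans (by linarith) hse)
      _ < (A.card : ℝ) := hgu
  have hkey : { d : Met X | ∀ U : Set X, IsOpen U → U.Nonempty → ¬IsDoublingOn d.1 U }
      = ⋂ i, E i := by
    ext d
    simp only [Set.mem_setOf_eq, Set.mem_iInter]
    constructor
    · rintro hd ⟨⟨V, hVb⟩, k⟩
      have hVopen : IsOpen V := hbasis.isOpen hVb
      have hVne : V.Nonempty := by
        rw [Set.nonempty_iff_ne_empty]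
        rintro rfl
        exact hbne hVb
      by_contra hno
      refine hd V hVopen hVne ⟨(k : ℝ) + 1, by positivity, (k : ℝ) + 1, by positivity, ?_⟩
      intro A hAV hA2
      by_contra hlt
      push_neg at hlt
      exact hno ⟨A, hAV, hA2, hlt⟩
    · intro hd U hU hUne hdoub
      obtain ⟨C, hC, α, hα, hbound⟩ := hdoub
      obtain ⟨x, hxU⟩ := hUne
      obtain ⟨V, hVb, hxV, hVU⟩ := hbasis.exists_subset_of_mem_open hxU hU
      obtain ⟨k, hk⟩ := exists_nat_ge (max C α)
      obtain ⟨A, hAV, hA2, hAlt⟩ := hd ⟨⟨V, hVb⟩, k⟩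
      have hcard := hbound A (hAV.trans hVU) hA2
      set r := setDiam d.1 ↑A / setSep d.1 ↑A with hr
      have hspos := setSep_pos d.1 A hA2
      have h1r : 1 ≤ r := (one_le_div hspos).2 (setSep_le_setDiam d.1 A hA2)
      have hCk : C ≤ (k : ℝ) + 1 := le_trans (le_max_left _ _) (by linarith)
      have hαk : α ≤ (k : ℝ) + 1 := le_trans (le_max_right _ _) (by linarith)
      have hrr : r ^ α ≤ r ^ ((k : ℝ) + 1) := Real.rpow_le_rpow_of_exponent_le h1r hαk
      have : C * r ^ α ≤ ((k : ℝ) + 1) * r ^ ((k : ℝ) + 1) := by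
        apply mul_le_mul hCk hrr (Real.rpow_nonneg (by linarith) _) (by positivity)
      linarith
  rw [hkey]
  exact IsGδ.iInter_of_isOpen hopen

end Gdelta

section cluster
variable {X : Type*} [MetricSpace X]

lemma exists_near_point {W : Set X} (hnd : ¬DiscreteTopology W) :
    ∃ x ∈ W, ∀ s : ℝ, 0 < s → ∃ y ∈ W, y ≠ x ∧ dist x y < s := by
  classical
  have h1 : ¬∀ a : W, IsOpen ({a} : Set W) := fun h => hnd (discreteTopology_iff_isOpen_singleton.2 h)
  push_neg at h1
  obtain ⟨a, ha⟩ := h1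
  refine ⟨a.1, a.2, ?_⟩
  intro s hs
  by_contra hno
  push_neg at hno
  apply ha
  have hset : ({a} : Set W) = Subtype.val ⁻¹' Metric.ball a.1 s := by
    ext b
    simp only [Set.mem_singleton_iff, Set.mem_preimage, Metric.mem_ball]
    constructor
    · rintro rfl; simpa using hs
    · intro hb
      by_contra hba
      have hbne : b.1 ≠ a.1 := fun h => hba (Subtype.ext h)
      have h2 := hno b.1 b.2 hbne
      rw [dist_comm] at hb
      exact absurd hb (not_lt.2 h2)
  rw [hset]
  exact Metric.isOpen_ball.preimage continuous_subtype_val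

lemma exists_cluster_finset {W : Set X} (hnd : ¬DiscreteTopology W)
    (N : ℕ) {r : ℝ} (hr : 0 < r) :
    ∃ A : Finset X, ↑A ⊆ W ∧ A.card = N ∧ ∀ x ∈ A, ∀ y ∈ A, dist x y ≤ r := by
  classical
  obtain ⟨x, hxW, hx⟩ := exists_near_point hnd
  have key : ∀ n : ℕ, ∃ A : Finset X, ↑A ⊆ W ∩ Metric.ball x (r / 2) ∧ A.card = n ∧ x ∉ A := by
    intro n
    induction n with
    | zero => exact ⟨∅, by simp, by simp, by simp⟩
    | succ n ih =>
        obtain ⟨A, hAsub, hAcard, hAx⟩ := ih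
        set ρ : ℝ := if h : A.Nonempty then min (r / 2) (A.inf' h fun y => dist x y) else r / 2
          with hρ
        have hρpos : 0 < ρ := by
          rw [hρ]
          split
          · rename_i h
            refine lt_min (by positivity) ?_
            rw [Finset.lt_inf'_iff]
            intro y hy
            have : y ≠ x := fun hyx => hAx (hyx ▸ hy)
            exact dist_pos.2 (Ne.symm this)
          · positivity
        have hρr : ρ ≤ r / 2 := by
          rw [hρ]; split
          · exact min_le_left _ _
          · exact le_rfl
        obtain ⟨y, hyW, hyx, hyd⟩ := hx ρ hρpos
        have hyA : y ∉ A := by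
          intro hyA
          have hAne : A.Nonempty := ⟨y, hyA⟩
          have : ρ ≤ dist x y := by
            rw [hρ, dif_pos hAne]
            exact le_trans (min_le_right _ _) (Finset.inf'_le _ hyA)
          exact absurd hyd (not_lt.2 this)
        refine ⟨insert y A, ?_, ?_, ?_⟩
        · rw [Finset.coe_insert]
          refine Set.insert_subset ⟨hyW, ?_⟩ hAsub
          rw [Metric.mem_ball, dist_comm]
          exact lt_of_lt_of_le hyd hρr
        · rw [Finset.card_insert_of_notMem hyA, hAcard]
        · simp only [Finset.mem_insert, not_or]
          exact ⟨Ne.symm hyx, hAx⟩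
  obtain ⟨A, hAsub, hAcard, -⟩ := key N
  refine ⟨A, fun a ha => (hAsub ha).1, hAcard, ?_⟩
  intro a ha b hb
  have ha2 := (hAsub ha).2
  have hb2 := (hAsub hb).2
  rw [Metric.mem_ball] at ha2 hb2
  calc dist a b ≤ dist a x + dist x b := dist_triangle _ _ _
    _ ≤ r / 2 + r / 2 := add_le_add ha2.le (by rw [dist_comm]; exact hb2.le)
    _ = r := by ring

end cluster

section keylemma
variable {X : Type*}

lemma exists_nowhere_doubling_close [m : MetricSpace X] [SecondCountableTopology X]
    (hX : ∀ U : Set X, IsOpen U → U.Nonempty → ¬DiscreteTopology U)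
    {ε : ℝ} (hε : 0 < ε) :
    ∃ e : MetricSpace X,
      e.toUniformSpace.toTopologicalSpace = m.toUniformSpace.toTopologicalSpace ∧
      (∀ x y : X, |mdist e x y - mdist m x y| ≤ ε) ∧
      ∀ U : Set X, IsOpen U → U.Nonempty → ¬IsDoublingOn e U := by
  classical
  have hmm : ∀ a b : X, mdist m a b = dist a b := fun _ _ => rfl
  rcases isEmpty_or_nonempty X with hXe | hXne
  · refine ⟨m, rfl, fun x y => (IsEmpty.false x).elim, ?_⟩
    rintro U - ⟨x, -⟩
    exact (IsEmpty.false x).elim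
  -- countable basis
  obtain ⟨bs, hbc, hbne, hbasis⟩ := TopologicalSpace.exists_countable_basis X
  have hbsne : bs.Nonempty := by
    obtain ⟨x⟩ := hXne
    have hx : x ∈ ⋃₀ bs := by rw [hbasis.sUnion_eq]; trivial
    obtain ⟨V, hV, -⟩ := hx
    exact ⟨V, hV⟩
  obtain ⟨Vs, hVs⟩ := hbc.exists_eq_range hbsne
  have hVsmem : ∀ n, Vs n ∈ bs := by
    intro n; rw [hVs]; exact Set.mem_range_self n
  have hVsopen : ∀ n, IsOpen (Vs n) := fun n => hbasis.isOpen (hVsmem n)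
  have hVsne : ∀ n, (Vs n).Nonempty := by
    intro n
    rw [Set.nonempty_iff_ne_empty]
    rintro h
    exact hbne (h ▸ hVsmem n)
  have hVcover : ∀ U : Set X, IsOpen U → U.Nonempty → ∃ n, Vs n ⊆ U := by
    rintro U hU ⟨x, hxU⟩
    obtain ⟨V, hVb, -, hVU⟩ := hbasis.exists_subset_of_mem_open hxU hU
    rw [hVs] at hVb
    obtain ⟨n, rfl⟩ := hVb
    exact ⟨n, hVU⟩
  -- patches: step function
  set nk : ℕ → ℕ := fun k => (Nat.unpair k).1 with hnk
  set mk : ℕ → ℕ := fun k => (Nat.unpair k).2 with hmk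
  have step : ∀ (k : ℕ) (b : ℝ), 0 < b → ∃ A : Finset X, ↑A ⊆ Vs (nk k) ∧
      A.card = mk k + 2 ∧ ∀ x ∈ A, ∀ y ∈ A, dist x y ≤ b := by
    intro k b hb
    exact exists_cluster_finset (hX _ (hVsopen (nk k)) (hVsne (nk k))) (mk k + 2) hb
  choose! F hFsub hFcard hFpair using step
  -- the scale sequence B and patches A
  obtain ⟨B, hB0, hBs⟩ : ∃ B : ℕ → ℝ, B 0 = ε / 2 ∧
      ∀ k, B (k + 1) = min (B k / 2) (setSep m ↑(F k (B k)) / 4) :=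
    ⟨fun k => Nat.rec (ε / 2) (fun k bk => min (bk / 2) (setSep m ↑(F k bk) / 4)) k,
      rfl, fun _ => rfl⟩
  have hBpos : ∀ k, 0 < B k := by
    intro k
    induction k with
    | zero => rw [hB0]; positivity
    | succ k ih =>
        rw [hBs]
        refine lt_min (by positivity) ?_
        have := setSep_pos m (F k (B k)) (by rw [hFcard k (B k) ih]; omega)
        positivity
  set A : ℕ → Finset X := fun k => F k (B k) with hA
  set σ : ℕ → ℝ := fun k => setSep m ↑(A k) with hσ
  have hAcard : ∀ k, (A k).card = mk k + 2 := fun k => hFcard k (B k) (hBpos k)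
  have hAsub : ∀ k, ↑(A k) ⊆ Vs (nk k) := fun k => hFsub k (B k) (hBpos k)
  have hApair : ∀ k, ∀ x ∈ A k, ∀ y ∈ A k, dist x y ≤ B k :=
    fun k => hFpair k (B k) (hBpos k)
  have hA2 : ∀ k, 2 ≤ (A k).card := by intro k; rw [hAcard k]; omega
  have hσpos : ∀ k, 0 < σ k := fun k => setSep_pos m (A k) (hA2 k)
  have hσdist : ∀ k, ∀ x ∈ A k, ∀ y ∈ A k, x ≠ y → σ k ≤ dist x y :=
    fun k x hx y hy hxy => setSep_le m (A k) hx hy hxy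
  have hσB : ∀ k, σ k ≤ B k := by
    intro k
    obtain ⟨x, hx, y, hy, hxy⟩ := Finset.one_lt_card.1 (by have := hA2 k; omega : 1 < (A k).card)
    exact le_trans (hσdist k x hx y hy hxy) (hApair k x hx y hy)
  have hB1 : ∀ k, B (k + 1) ≤ B k / 2 := by intro k; rw [hBs]; exact min_le_left _ _
  have hB2 : ∀ k, B (k + 1) ≤ σ k / 4 := by intro k; rw [hBs]; exact min_le_right _ _
  have hBdec : ∀ k, B (k + 1) ≤ B k := fun k => le_trans (hB1 k) (by linarith [hBpos k])
  have hBanti : ∀ j k, j ≤ k → B k ≤ B j := by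
    intro j k hjk
    induction hjk with
    | refl => exact le_rfl
    | step h ih => exact le_trans (hBdec _) ih
  have hBhalf : ∀ k, B k ≤ ε / 2 / 2 ^ k := by
    intro k
    induction k with
    | zero => simp [hB0]
    | succ k ih =>
        calc B (k+1) ≤ B k / 2 := hB1 k
          _ ≤ ε / 2 / 2 ^ k / 2 := by linarith
          _ = ε / 2 / 2 ^ (k+1) := by ring
  -- nonempty offDiag
  have hne : ∀ k, ((A k).offDiag).Nonempty := by
    intro k
    obtain ⟨x, hx, y, hy, hxy⟩ := Finset.one_lt_card.1 (by have := hA2 k; omega : 1 < (A k).card)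
    exact ⟨(x, y), Finset.mem_offDiag.2 ⟨hx, hy, hxy⟩⟩
  -- the metric sequence
  obtain ⟨f, hf0, hfs⟩ : ∃ f : ℕ → X → X → ℝ, (∀ x y, f 0 x y = dist x y) ∧
      ∀ k x y, f (k + 1) x y = min (f k x y)
        ((A k).offDiag.inf' (hne k) fun p => f k x p.1 + σ k + f k p.2 y) :=
    ⟨fun k => Nat.rec (motive := fun _ => X → X → ℝ) (fun x y => dist x y)
      (fun k fk x y => min (fk x y)
        ((A k).offDiag.inf' (hne k) fun p => fk x p.1 + σ k + fk p.2 y)) k,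
      fun _ _ => rfl, fun _ _ _ => rfl⟩

  -- basic properties of f
  have hfnonneg : ∀ k (x y : X), 0 ≤ f k x y := by
    intro k
    induction k with
    | zero => intro x y; rw [hf0]; exact dist_nonneg
    | succ k ih =>
        intro x y
        rw [hfs]
        refine le_min (ih x y) (Finset.le_inf' _ _ ?_)
        intro p hp
        have h1 := ih x p.1
        have h2 := ih p.2 y
        have h3 := hσpos k
        linarith
  have hfdec : ∀ k (x y : X), f (k + 1) x y ≤ f k x y := by
    intro k x y; rw [hfs]; exact min_le_left _ _
  have hfanti : ∀ j k, j ≤ k → ∀ x y : X, f k x y ≤ f j x y := by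
    intro j k hjk
    induction hjk with
    | refl => intro x y; exact le_rfl
    | step h ih => intro x y; exact le_trans (hfdec _ x y) (ih x y)
  have hfle_dist : ∀ k (x y : X), f k x y ≤ dist x y := by
    intro k x y
    have := hfanti 0 k (Nat.zero_le k) x y
    rwa [hf0] at this
  have hfself : ∀ k (x : X), f k x x = 0 := by
    intro k x
    refine le_antisymm ?_ (hfnonneg k x x)
    have := hfle_dist k x x
    simpa using this
  have hfsymm : ∀ k (x y : X), f k x y = f k y x := by
    intro k
    induction k with
    | zero => intro x y; rw [hf0, hf0, dist_comm]
    | succ k ih =>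
        have key : ∀ x y : X,
            ((A k).offDiag.inf' (hne k) fun p => f k x p.1 + σ k + f k p.2 y) ≤
            ((A k).offDiag.inf' (hne k) fun p => f k y p.1 + σ k + f k p.2 x) := by
          intro x y
          refine Finset.le_inf' _ _ ?_
          intro p hp
          have hswap : (p.2, p.1) ∈ (A k).offDiag := by
            rw [Finset.mem_offDiag] at hp ⊢
            exact ⟨hp.2.1, hp.1, hp.2.2.symm⟩
          have h1 := Finset.inf'_le (fun q : X × X => f k x q.1 + σ k + f k q.2 y) hswap
          simp only at h1
          rw [ih x p.2, ih p.1 y] at h1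
          have e1 : f k p.2 x + σ k + f k y p.1 = f k y p.1 + σ k + f k p.2 x := by ring
          rw [e1] at h1
          exact h1
        intro x y
        rw [hfs, hfs, ih x y]
        exact congrArg _ (le_antisymm (key x y) (key y x))
  have hftri : ∀ k (x y z : X), f k x z ≤ f k x y + f k y z := by
    intro k
    induction k with
    | zero => intro x y z; rw [hf0, hf0, hf0]; exact dist_triangle x y z
    | succ k ih =>
        intro x y z
        rw [hfs, hfs, hfs]
        rcases min_cases (f k x y)
          ((A k).offDiag.inf' (hne k) fun p => f k x p.1 + σ k + f k p.2 y) with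
          ⟨h1, -⟩ | ⟨h1, -⟩ <;>
        rcases min_cases (f k y z)
          ((A k).offDiag.inf' (hne k) fun p => f k y p.1 + σ k + f k p.2 z) with
          ⟨h2, -⟩ | ⟨h2, -⟩ <;> rw [h1, h2]
        · exact le_trans (min_le_left _ _) (ih x y z)
        · -- P + Q
          obtain ⟨q, hq, hqeq⟩ :=
            Finset.exists_mem_eq_inf' (hne k) (fun p : X × X => f k y p.1 + σ k + f k p.2 z)
          rw [hqeq]
          refine le_trans (min_le_right _ _) ?_
          have h3 := Finset.inf'_le (fun p : X × X => f k x p.1 + σ k + f k p.2 z) hq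
          have h4 := ih x y q.1
          linarith
        · -- Q + P
          obtain ⟨p, hp, hpeq⟩ :=
            Finset.exists_mem_eq_inf' (hne k) (fun p : X × X => f k x p.1 + σ k + f k p.2 y)
          rw [hpeq]
          refine le_trans (min_le_right _ _) ?_
          have h3 := Finset.inf'_le (fun q : X × X => f k x q.1 + σ k + f k q.2 z) hp
          have h4 := ih p.2 y z
          linarith
        · -- Q + Q
          obtain ⟨p, hp, hpeq⟩ :=
            Finset.exists_mem_eq_inf' (hne k) (fun p : X × X => f k x p.1 + σ k + f k p.2 y)
          obtain ⟨q, hq, hqeq⟩ :=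
            Finset.exists_mem_eq_inf' (hne k) (fun p : X × X => f k y p.1 + σ k + f k p.2 z)
          rw [hpeq, hqeq]
          rw [Finset.mem_offDiag] at hp hq
          by_cases hpq : p.1 = q.2
          · refine le_trans (min_le_left _ _) ?_
            have h3 := ih x p.1 z
            have h4 : f k p.1 z = f k q.2 z := by rw [hpq]
            have h5 := hfnonneg k p.2 y
            have h6 := hfnonneg k y q.1
            have h7 := hσpos k
            linarith
          · have hmem : (p.1, q.2) ∈ (A k).offDiag :=
              Finset.mem_offDiag.2 ⟨hp.1, hq.2.1, hpq⟩
            refine le_trans (min_le_right _ _) ?_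
            have h3 := Finset.inf'_le (fun r : X × X => f k x r.1 + σ k + f k r.2 z) hmem
            simp only at h3
            have h5 := hfnonneg k p.2 y
            have h6 := hfnonneg k y q.1
            have h7 := hσpos k
            linarith
  have hflow : ∀ k (x y : X), min (f k x y) (max (σ k) (f k x y - B k)) ≤ f (k + 1) x y := by
    intro k x y
    rw [hfs]
    refine min_le_min le_rfl (Finset.le_inf' _ _ ?_)
    intro p hp
    rw [Finset.mem_offDiag] at hp
    have h1 := hfnonneg k x p.1
    have h2 := hfnonneg k p.2 y
    have h3 := hσpos k
    have h4 : f k x y ≤ f k x p.1 + f k p.1 p.2 + f k p.2 y := by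
      have := hftri k x p.1 y
      have := hftri k p.1 p.2 y
      linarith
    have h5 : f k p.1 p.2 ≤ B k :=
      le_trans (hfle_dist k p.1 p.2) (hApair k p.1 hp.1 p.2 hp.2.1)
    simp only [max_le_iff]
    constructor <;> linarith
  have hfstep : ∀ k (x y : X), f k x y - B k ≤ f (k + 1) x y := by
    intro k x y
    refine le_trans ?_ (hflow k x y)
    have hB := hBpos k
    refine le_min (by linarith) (le_max_right _ _ |>.trans' le_rfl)
  have hfpatch : ∀ k j, j ≤ k → ∀ a ∈ A k, ∀ b ∈ A k, f j a b = dist a b := by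
    intro k j
    induction j with
    | zero => intro _ a _ b _; exact hf0 a b
    | succ j ih =>
        intro hjk a ha b hb
        have hj : f j a b = dist a b := ih (by omega) a ha b hb
        rw [hfs, hj]
        refine min_eq_left (Finset.le_inf' _ _ ?_)
        intro p hp
        have h1 : dist a b ≤ B k := hApair k a ha b hb
        have h2 : B k ≤ B (j + 1) := hBanti (j + 1) k hjk
        have h3 := hB2 j
        have h4 := hfnonneg j a p.1
        have h5 := hfnonneg j p.2 b
        have h6 := hσpos j
        linarith
  have hfeq : ∀ k, ∀ a ∈ A k, ∀ b ∈ A k, a ≠ b → f (k + 1) a b = σ k := by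
    intro k a ha b hb hab
    have hmem : (a, b) ∈ (A k).offDiag := Finset.mem_offDiag.2 ⟨ha, hb, hab⟩
    refine le_antisymm ?_ ?_
    · rw [hfs]
      refine le_trans (min_le_right _ _) ?_
      have h3 := Finset.inf'_le (fun p : X × X => f k a p.1 + σ k + f k p.2 b) hmem
      simp only at h3
      rw [hfself k a, hfself k b] at h3
      linarith
    · rw [hfs]
      refine le_min ?_ (Finset.le_inf' _ _ ?_)
      · rw [hfpatch k k le_rfl a ha b hb]
        exact hσdist k a ha b hb hab
      · intro p hp
        have h4 := hfnonneg k a p.1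
        have h5 := hfnonneg k p.2 b
        linarith
  have hfcum : ∀ k l, k ≤ l → ∀ x y : X, f k x y - 2 * B k + 2 * B l ≤ f l x y := by
    intro k l hkl
    induction hkl with
    | refl => intro x y; linarith [le_refl (f k x y)]
    | @step l hl ih =>
        intro x y
        have h1 := hfstep l x y
        have h2 := ih x y
        have h3 := hB1 l
        linarith

  -- the limit function
  set Fd : X → X → ℝ := fun x y => ⨅ k, f k x y with hFd
  have hbdd : ∀ x y : X, BddBelow (Set.range fun k => f k x y) := by
    intro x y
    refine ⟨0, ?_⟩
    rintro r ⟨k, rfl⟩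
    exact hfnonneg k x y
  have hFle : ∀ k (x y : X), Fd x y ≤ f k x y := fun k x y => ciInf_le (hbdd x y) k
  have hFge : ∀ k (x y : X), f k x y - 2 * B k ≤ Fd x y := by
    intro k x y
    refine le_ciInf ?_
    intro l
    rcases le_or_gt k l with h | h
    · have h1 := hfcum k l h x y
      have h2 := hBpos l
      linarith
    · have h1 := hfanti l k h.le x y
      have h2 := hBpos k
      linarith
  have hFnonneg : ∀ x y : X, 0 ≤ Fd x y := fun x y => le_ciInf fun k => hfnonneg k x y
  have hFself : ∀ x : X, Fd x x = 0 := by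
    intro x
    refine le_antisymm ?_ (hFnonneg x x)
    have := hFle 0 x x
    rw [hf0] at this
    simpa using this
  have hFsymm : ∀ x y : X, Fd x y = Fd y x := by
    intro x y
    rw [hFd]
    exact iInf_congr fun k => hfsymm k x y
  have hFledist : ∀ x y : X, Fd x y ≤ dist x y := by
    intro x y
    have := hFle 0 x y
    rwa [hf0] at this
  have hFclose : ∀ x y : X, dist x y - ε ≤ Fd x y := by
    intro x y
    have h1 := hFge 0 x y
    rw [hf0, hB0] at h1
    linarith
  have hBsmall : ∀ c : ℝ, 0 < c → ∃ k, B k < c := by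
    intro c hc
    obtain ⟨k, hk⟩ := pow_unbounded_of_one_lt (ε / 2 / c) (one_lt_two (α := ℝ))
    refine ⟨k, lt_of_le_of_lt (hBhalf k) ?_⟩
    rw [div_lt_iff₀ (by positivity)]
    rw [div_lt_iff₀ hc] at hk
    linarith
  have hFtri : ∀ x y z : X, Fd x z ≤ Fd x y + Fd y z := by
    intro x y z
    by_contra hgt
    push_neg at hgt
    obtain ⟨k, hk⟩ := hBsmall ((Fd x z - (Fd x y + Fd y z)) / 4) (by linarith)
    have h1 := hFle k x z
    have h2 := hftri k x y z
    have h3 := hFge k x y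
    have h4 := hFge k y z
    linarith
  -- the uniform lower bound
  have hunif : ∀ r : ℝ, 0 < r → ∃ s : ℝ, 0 < s ∧ ∀ x y : X, r ≤ dist x y → s ≤ Fd x y := by
    intro r hr
    have claim : ∀ K, (∀ j, j < K → r ≤ σ j) → ∀ j, j ≤ K → ∀ x y : X,
        r ≤ dist x y → r ≤ f j x y := by
      intro K hK j
      induction j with
      | zero =>
          intro _ x y hxy
          rw [hf0]
          exact hxy
      | succ j ih =>
          intro hjK x y hxy
          have hj := ih (by omega) x y hxy
          rw [hfs]
          refine le_min hj (Finset.le_inf' _ _ ?_)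
          intro p hp
          have h1 := hfnonneg j x p.1
          have h2 := hfnonneg j p.2 y
          have h3 := hK j (by omega)
          linarith
    by_cases hex : ∃ k, σ k < r
    · set K := Nat.find hex with hKdef
      have hKlt : σ K < r := Nat.find_spec hex
      have hKmin : ∀ j, j < K → r ≤ σ j := fun j hj => le_of_not_gt (Nat.find_min hex hj)
      refine ⟨σ K / 2, by have := hσpos K; positivity, ?_⟩
      intro x y hxy
      have hfK : r ≤ f K x y := claim K hKmin K le_rfl x y hxy
      have hK1 : σ K ≤ f (K + 1) x y := by
        refine le_trans (le_min (by linarith) (le_max_left _ _)) (hflow K x y)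
      have h1 := hFge (K + 1) x y
      have h2 := hB2 K
      linarith
    · push_neg at hex
      refine ⟨r, hr, ?_⟩
      intro x y hxy
      exact le_ciInf fun k => claim k (fun j _ => hex j) k le_rfl x y hxy
  have hFpos : ∀ x y : X, Fd x y = 0 → x = y := by
    intro x y h0
    by_contra hxy
    have hd : 0 < dist x y := dist_pos.2 hxy
    obtain ⟨s, hs, hb⟩ := hunif (dist x y) hd
    have := hb x y le_rfl
    linarith
  -- topology characterization
  have hTopChar : ∀ s : Set X, IsOpen s ↔ ∀ x ∈ s, ∃ δ > 0, ∀ y, Fd x y < δ → y ∈ s := by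
    intro s
    constructor
    · intro hs x hxs
      obtain ⟨r, hr, hball⟩ := Metric.isOpen_iff.1 hs x hxs
      obtain ⟨sδ, hsδ, hb⟩ := hunif r hr
      refine ⟨sδ, hsδ, ?_⟩
      intro y hy
      apply hball
      rw [Metric.mem_ball, dist_comm]
      by_contra hge
      push_neg at hge
      exact absurd hy (not_lt.2 (hb x y hge))
    · intro h
      rw [Metric.isOpen_iff]
      intro x hxs
      obtain ⟨δ, hδ, hy⟩ := h x hxs
      refine ⟨δ, hδ, ?_⟩
      intro y hyb
      rw [Metric.mem_ball] at hyb
      refine hy y (lt_of_le_of_lt (hFledist x y) ?_)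
      rwa [dist_comm] at hyb
  -- build the new metric space
  set e : MetricSpace X := MetricSpace.ofDistTopology Fd hFself (fun x y => hFsymm x y)
    (fun x y z => hFtri x y z) hTopChar hFpos with he
  have hmdist_e : ∀ x y : X, mdist e x y = Fd x y := fun _ _ => rfl
  refine ⟨e, rfl, ?_, ?_⟩
  · intro x y
    rw [hmdist_e, hmm, abs_le]
    have h1 := hFclose x y
    have h2 := hFledist x y
    constructor
    · linarith
    · linarith
  · -- nowhere doubling
    rintro U hU hUne ⟨C, hC, α, hα, hbound⟩
    obtain ⟨n, hn⟩ := hVcover U hU hUne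
    set N : ℕ := ⌈C * (2 : ℝ) ^ α⌉₊ with hN
    set k : ℕ := Nat.pair n N with hk
    have hnkk : nk k = n := by simp [hnk, hk, Nat.unpair_pair]
    have hmkk : mk k = N := by simp [hmk, hk, Nat.unpair_pair]
    have hup : ∀ a ∈ A k, ∀ b ∈ A k, mdist e a b ≤ σ k := by
      intro a ha b hb
      rcases eq_or_ne a b with rfl | hab
      · rw [hmdist_e, hFself]
        exact (hσpos k).le
      · rw [hmdist_e]
        exact le_trans (hFle (k + 1) a b) (le_of_eq (hfeq k a ha b hb hab))
    have hlo : ∀ a ∈ A k, ∀ b ∈ A k, a ≠ b → σ k / 2 ≤ mdist e a b := by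
      intro a ha b hb hab
      rw [hmdist_e]
      have h1 := hFge (k + 1) a b
      rw [hfeq k a ha b hb hab] at h1
      have h2 := hB2 k
      linarith
    have hDiam : setDiam e ↑(A k) ≤ σ k := setDiam_le e (A k) (hσpos k).le hup
    have hSep : σ k / 2 ≤ setSep e ↑(A k) := le_setSep e (A k) (hA2 k) hlo
    have hSepPos : 0 < setSep e ↑(A k) := setSep_pos e (A k) (hA2 k)
    have hratio : setDiam e ↑(A k) / setSep e ↑(A k) ≤ 2 := by
      rw [div_le_iff₀ hSepPos]
      have := hσpos k
      linarith
    have hsubU : ↑(A k) ⊆ U := by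
      intro a ha
      apply hn
      have := hAsub k ha
      rwa [hnkk] at this
    have hb := hbound (A k) hsubU (hA2 k)
    have hr0 : 0 ≤ setDiam e ↑(A k) / setSep e ↑(A k) :=
      div_nonneg (setDiam_nonneg e (A k)) hSepPos.le
    have h2 : (setDiam e ↑(A k) / setSep e ↑(A k)) ^ α ≤ (2 : ℝ) ^ α :=
      Real.rpow_le_rpow hr0 hratio hα.le
    have h3 : C * (setDiam e ↑(A k) / setSep e ↑(A k)) ^ α ≤ C * (2 : ℝ) ^ α :=
      mul_le_mul_of_nonneg_left h2 hC.le
    have h4 : C * (2 : ℝ) ^ α ≤ (N : ℝ) := Nat.le_ceil _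
    have hcard : ((A k).card : ℝ) = (N : ℝ) + 2 := by
      rw [hAcard k, hmkk]
      push_cast
      ring
    rw [hcard] at hb
    linarith


end keylemma

section densitypart

lemma dense_part {X : Type*} [t : TopologicalSpace X] [SecondCountableTopology X]
    (hX : ∀ U : Set X, IsOpen U → U.Nonempty → ¬DiscreteTopology U) :
    Dense { d : Met X | ∀ U : Set X, IsOpen U → U.Nonempty → ¬IsDoublingOn d.1 U } := by
  rw [dense_iff_inter_open]
  intro O hO hOne
  obtain ⟨d₀, hd₀⟩ := hOne
  obtain ⟨εe, hεe, hball⟩ := exists_metBall_subset hO hd₀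
  obtain ⟨m₀, hm₀⟩ := d₀
  have hm₀' : m₀.toUniformSpace.toTopologicalSpace = t := hm₀
  subst hm₀'
  set εr : ℝ := if εe = ⊤ then 1 else εe.toReal / 2 with hεr
  have hεrpos : 0 < εr := by
    rw [hεr]
    split
    · norm_num
    · rename_i h
      have := ENNReal.toReal_pos (ne_of_gt hεe) h
      positivity
  have hεrlt : ENNReal.ofReal εr < εe := by
    rw [hεr]
    split
    · rename_i h
      rw [h]
      exact ENNReal.ofReal_lt_top
    · rename_i h
      have h1 : 0 < εe.toReal := ENNReal.toReal_pos (ne_of_gt hεe) h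
      calc ENNReal.ofReal (εe.toReal / 2) < ENNReal.ofReal εe.toReal :=
            (ENNReal.ofReal_lt_ofReal_iff h1).2 (by linarith)
        _ = εe := ENNReal.ofReal_toReal h
  obtain ⟨e, heq, hclose, hnd⟩ := exists_nowhere_doubling_close (m := m₀) hX hεrpos
  refine ⟨⟨e, heq⟩, ?_, ?_⟩
  · apply hball
    show metD m₀ e < εe
    refine lt_of_le_of_lt (metD_le_ofReal ?_) hεrlt
    intro x y
    rw [abs_sub_comm]
    exact hclose x y
  · intro U hU hUne
    refine hnd U ?_ hUne
    show @IsOpen X e.toUniformSpace.toTopologicalSpace U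
    rw [heq]
    exact hU

end densitypart

theorem locally_non_doubling_dense_Gdelta (X : Type*) [TopologicalSpace X]
    [TopologicalSpace.MetrizableSpace X] [SecondCountableTopology X]
    [LocallyCompactSpace X]
    (hX : ∀ U : Set X, IsOpen U → U.Nonempty → ¬DiscreteTopology U) :
    Dense { d : Met X | ∀ U : Set X, IsOpen U → U.Nonempty → ¬IsDoublingOn d.1 U } ∧
    IsGδ { d : Met X | ∀ U : Set X, IsOpen U → U.Nonempty → ¬IsDoublingOn d.1 U } :=
  ⟨dense_part hX, isGdelta_part⟩
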